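/- arXiv:2009.04716 — 5 statements merged into one kernel-verified Lean document; each statement's English description precedes it below -/
import Mathlib

section
/- Let L be a q²-linearized additive polynomial over F_{q²}-algebra k with L(λx)=λL(x) for λ∈F_{q²}. For δ ∈ k with δ^q + δ = 0 and β ∈ k with L(β) = 0, the maps (t,u) ↦ (t + δu, u) and (t,u) ↦ (t + β, u) preserve the polynomial g(t,u) = L(t)^q·L(u) + L(t)·L(u)^q + c'. -/
/-- the maps (t,u) ↦ (t+δu, u) with δ^q+δ=0 and (t,u) ↦ (t+β, u)
with L(β)=0 preserve g(t,u) = L(t)^q L(u) + L(t) L(u)^q + c'. -/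
theorem stmt4 {k : Type*} [Field k] [IsAlgClosed k] (p q n : ℕ) (hp : p.Prime)
    [CharP k p] (hq : ∃ e : ℕ, 0 < e ∧ q = p ^ e)
    (A : ℕ → k) (hA0 : A 0 ≠ 0) (hA : ∀ i, A i ^ q ^ 2 = A i) (L : k → k)
    (hL : ∀ x : k, L x = (∑ i ∈ Finset.range n, A i * x ^ q ^ (2 * i)) + x ^ q ^ (2 * n))
    (c' : k) (hc' : c' ≠ 0) (δ β : k) (hδ : δ ^ q + δ = 0) (hβ : L β = 0) :
    (∀ t u : k,
        L (t + δ * u) ^ q * L u + L (t + δ * u) * L u ^ q + c' =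
          L t ^ q * L u + L t * L u ^ q + c') ∧
    (∀ t u : k,
        L (t + β) ^ q * L u + L (t + β) * L u ^ q + c' =
          L t ^ q * L u + L t * L u ^ q + c') := by
  obtain ⟨e, he, hqe⟩ := hq
  haveI : Fact p.Prime := ⟨hp⟩
  have hadd : ∀ (m : ℕ) (a b : k), (a + b) ^ q ^ m = a ^ q ^ m + b ^ q ^ m := by
    intro m a b
    rw [hqe, ← pow_mul, add_pow_char_pow]
  have hq1 : ∀ a b : k, (a + b) ^ q = a ^ q + b ^ q := by
    intro a b
    have := hadd 1 a b
    simpa using this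
  have hneg : (-1 : k) ^ q = -1 := by
    rw [hqe]; exact neg_one_pow_char_pow k p e
  have hδ2 : δ ^ q ^ 2 = δ := by
    have h1 : δ ^ q = -δ := by exact eq_neg_of_add_eq_zero_left hδ
    rw [sq, pow_mul, h1, neg_pow, hneg, h1]
    ring
  have hδi : ∀ i : ℕ, δ ^ q ^ (2 * i) = δ := by
    intro i
    induction i with
    | zero => simp
    | succ i ih =>
      have : 2 * (i + 1) = 2 * i + 2 := by ring
      rw [this, pow_add, pow_mul, ih, hδ2]
  have Ladd : ∀ x y : k, L (x + y) = L x + L y := by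
    intro x y
    rw [hL, hL, hL]
    simp only [hadd, mul_add, Finset.sum_add_distrib]
    ring
  have Lscal : ∀ x : k, L (δ * x) = δ * L x := by
    intro x
    rw [hL, hL, mul_add, Finset.mul_sum]
    congr 1
    · refine Finset.sum_congr rfl fun i _ => ?_
      rw [mul_pow, hδi]
      ring
    · rw [mul_pow, hδi]
  constructor
  · intro t u
    have h2 : (L t + δ * L u) ^ q = L t ^ q + δ ^ q * L u ^ q := by
      rw [hq1, mul_pow]
    rw [Ladd, Lscal, h2]
    linear_combination (L u ^ q * L u) * hδ
  · intro t u
    rw [Ladd, hβ, add_zero]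
end

section
/- Let q be a prime power and let α, β ∈ F_{q²}^* with α^(q+1) + β^(q+1) = 1, λ ∈ F_{q²} with λ^(q+1) = 1, and δ, ε in the kernel of L, where L(x) = x + x^(q²) + ⋯ + x^(q^(2n)) (or more generally a q²-linearized polynomial over F_{q²} with nonzero linear term). Then the map (x,y) ↦ (α^q·x − λβ^q·y + δ, β·x + λα·y + ε) preserves the polynomial L(x)^(q+1) + L(y)^(q+1) + c. -/
/-- the map (x,y) ↦ (α^q x − λβ^q y + δ, βx + λαy + ε) preserves
L(x)^(q+1) + L(y)^(q+1) + c. -/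
theorem stmt6 {k : Type*} [Field k] [IsAlgClosed k] (p q n : ℕ) (hp : p.Prime)
    [CharP k p] (hq : ∃ e : ℕ, 0 < e ∧ q = p ^ e)
    (A : ℕ → k) (hA0 : A 0 ≠ 0) (hA : ∀ i, A i ^ q ^ 2 = A i) (L : k → k)
    (hL : ∀ x : k, L x = (∑ i ∈ Finset.range n, A i * x ^ q ^ (2 * i)) + x ^ q ^ (2 * n))
    (c : k) (hc : c ≠ 0)
    (α β lam δ ε : k) (hα0 : α ≠ 0) (hβ0 : β ≠ 0)
    (hα2 : α ^ q ^ 2 = α) (hβ2 : β ^ q ^ 2 = β)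
    (hαβ : α ^ (q + 1) + β ^ (q + 1) = 1)
    (hlam : lam ^ (q + 1) = 1) (hlam2 : lam ^ q ^ 2 = lam)
    (hδ : L δ = 0) (hε : L ε = 0) :
    ∀ x y : k,
      L (α ^ q * x - lam * β ^ q * y + δ) ^ (q + 1) +
          L (β * x + lam * α * y + ε) ^ (q + 1) + c =
        L x ^ (q + 1) + L y ^ (q + 1) + c := by
  have : Fact p.Prime := ⟨hp⟩
  obtain ⟨e, he, rfl⟩ := hq
  have frob_add : ∀ (m : ℕ) (u v : k),
      (u + v) ^ (p ^ e) ^ m = u ^ (p ^ e) ^ m + v ^ (p ^ e) ^ m := by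
    intro m u v
    rw [← pow_mul, add_pow_char_pow, pow_mul]
  have frob_sub : ∀ (m : ℕ) (u v : k),
      (u - v) ^ (p ^ e) ^ m = u ^ (p ^ e) ^ m - v ^ (p ^ e) ^ m := by
    intro m u v
    rw [← pow_mul, sub_pow_char_pow, pow_mul]
  have Ladd : ∀ u v : k, L (u + v) = L u + L v := by
    intro u v
    simp only [hL, frob_add, mul_add, Finset.sum_add_distrib]
    ring
  have Lsub : ∀ u v : k, L (u - v) = L u - L v := by
    intro u v
    simp only [hL, frob_sub, mul_sub, Finset.sum_sub_distrib]
    ring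
  have Lscal : ∀ a : k, a ^ (p ^ e) ^ 2 = a → ∀ x : k, L (a * x) = a * L x := by
    intro a ha x
    have key : ∀ i : ℕ, a ^ (p ^ e) ^ (2 * i) = a := by
      intro i
      induction i with
      | zero => simp
      | succ m ih =>
        have h : (p ^ e) ^ (2 * (m + 1)) = (p ^ e) ^ (2 * m) * (p ^ e) ^ 2 := by ring
        rw [h, pow_mul, ih, ha]
    simp only [hL, mul_pow, key]
    rw [mul_add, Finset.mul_sum]
    congr 1
    exact Finset.sum_congr rfl fun i _ => by ring
  have hαq : (α ^ (p ^ e)) ^ (p ^ e) ^ 2 = α ^ (p ^ e) := by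
    rw [← pow_mul, mul_comm, pow_mul, hα2]
  have hβq : (β ^ (p ^ e)) ^ (p ^ e) ^ 2 = β ^ (p ^ e) := by
    rw [← pow_mul, mul_comm, pow_mul, hβ2]
  have hlamβ : (lam * β ^ (p ^ e)) ^ (p ^ e) ^ 2 = lam * β ^ (p ^ e) := by
    rw [mul_pow, hlam2, hβq]
  have hlamα : (lam * α) ^ (p ^ e) ^ 2 = lam * α := by
    rw [mul_pow, hlam2, hα2]
  intro x y
  have e1 : L (α ^ (p ^ e) * x - lam * β ^ (p ^ e) * y + δ) =
      α ^ (p ^ e) * L x - lam * β ^ (p ^ e) * L y := by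
    rw [Ladd, hδ, add_zero, Lsub, Lscal _ hαq, Lscal _ hlamβ]
  have e2 : L (β * x + lam * α * y + ε) = β * L x + lam * α * L y := by
    rw [Ladd, hε, add_zero, Ladd, Lscal _ hβ2, Lscal _ hlamα]
  rw [e1, e2]
  set X := L x
  set Y := L y
  have h1 : α ^ (p ^ e) * α + β ^ (p ^ e) * β = 1 := by
    rw [← pow_succ, ← pow_succ]; exact hαβ
  have h2 : lam ^ (p ^ e) * lam = 1 := by
    rw [← pow_succ]; exact hlam
  have hαqq : (α ^ (p ^ e)) ^ (p ^ e) = α := by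
    rw [← pow_mul, ← sq, hα2]
  have hβqq : (β ^ (p ^ e)) ^ (p ^ e) = β := by
    rw [← pow_mul, ← sq, hβ2]
  rw [pow_succ (α ^ (p ^ e) * X - lam * β ^ (p ^ e) * Y),
    pow_succ (β * X + lam * α * Y), pow_succ X, pow_succ Y,
    sub_pow_char_pow, add_pow_char_pow, mul_pow, mul_pow, mul_pow, mul_pow,
    hαqq, hβqq]
  linear_combination (X ^ (p ^ e) * X + Y ^ (p ^ e) * Y * (lam ^ (p ^ e) * lam)) * h1 +
    Y ^ (p ^ e) * Y * h2
end

section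
/- The set of roots in the algebraic closure of F_q of the polynomial P(T) = T^(q²) − β^(−(q²−1))·T − (x^(q^(2(n+1))) − x), viewed as a polynomial in T over F_{q^(2(n+1))}(x), is exactly { Σ_{i=0}^{n} β^(q^(2(i+1))−1) · x^(q^(2i)) + λ/β : λ ∈ F_{q²} }, where β ∈ F_{q^(2(n+1))}^* is fixed. -/
open Polynomial

/-- the set of roots of P(T) = T^(q²) − β^(−(q²−1)) T − (x^(q^(2(n+1))) − x)
is exactly { Σ_{i=0}^n β^(q^(2(i+1))−1) x^(q^(2i)) + λ/β : λ ∈ F_{q²} }. -/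
theorem stmt9 {k : Type*} [Field k] [IsAlgClosed k] (p q n : ℕ) (hp : p.Prime)
    [CharP k p] (hq : ∃ e : ℕ, 0 < e ∧ q = p ^ e) (hn : 1 ≤ n)
    (β : k) (hβ0 : β ≠ 0) (hβ : β ^ q ^ (2 * (n + 1)) = β) :
    ∀ g : Polynomial k,
      g ^ q ^ 2 - C (β ^ (q ^ 2 - 1))⁻¹ * g - (X ^ q ^ (2 * (n + 1)) - X) = 0 ↔
        ∃ lam : k, lam ^ q ^ 2 = lam ∧
          g = (∑ i ∈ Finset.range (n + 1),
                C (β ^ (q ^ (2 * (i + 1)) - 1)) * X ^ q ^ (2 * i)) + C (lam / β) := by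
  obtain ⟨e, he, rfl⟩ := hq
  haveI : Fact p.Prime := ⟨hp⟩
  intro g
  set q : ℕ := p ^ e with hqdef
  have hq1 : 1 < q := Nat.one_lt_pow he.ne' hp.one_lt
  set Q : ℕ := q ^ 2 with hQdef
  have hQp : Q = p ^ (e * 2) := by rw [hQdef, hqdef, ← pow_mul]
  have hQ1 : 1 < Q := Nat.one_lt_pow (by norm_num) hq1
  -- rewrite exponents q^(2*m) as Q^m
  have hexp : ∀ m : ℕ, q ^ (2 * m) = Q ^ m := fun m => pow_mul q 2 m
  -- transport of β-periodicity
  have hβQ : β ^ Q ^ (n + 1) = β := by rw [← hexp]; exact hβ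
  -- frobenius-type additivity
  have frob_sub : ∀ a b : Polynomial k, (a - b) ^ Q = a ^ Q - b ^ Q := fun a b => by
    rw [hQp]; exact sub_pow_char_pow a b (e * 2)
  -- the telescoping family
  set f : ℕ → Polynomial k := fun j => C (β ^ (Q ^ (j + 1) - Q)) * X ^ Q ^ j with hf
  have hQle : ∀ j : ℕ, Q ≤ Q ^ (j + 1) := fun j =>
    le_self_pow₀ (le_of_lt hQ1) (Nat.succ_ne_zero j)
  -- the special solution
  set S : Polynomial k := ∑ i ∈ Finset.range (n + 1),
      C (β ^ (Q ^ (i + 1) - 1)) * X ^ Q ^ i with hS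
  have hterm : ∀ i : ℕ,
      (C (β ^ (Q ^ (i + 1) - 1)) * X ^ Q ^ i : Polynomial k) ^ Q
        - C (β ^ (Q - 1))⁻¹ * (C (β ^ (Q ^ (i + 1) - 1)) * X ^ Q ^ i)
        = f (i + 1) - f i := by
    intro i
    have h1 : (β ^ (Q ^ (i + 1) - 1)) ^ Q = β ^ (Q ^ (i + 2) - Q) := by
      rw [← pow_mul, Nat.sub_mul, one_mul, ← pow_succ]
    have h2 : (β ^ (Q - 1))⁻¹ * β ^ (Q ^ (i + 1) - 1) = β ^ (Q ^ (i + 1) - Q) := by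
      have harith : (Q ^ (i + 1) - Q) + (Q - 1) = Q ^ (i + 1) - 1 := by
        have := hQle i
        omega
      rw [← harith, pow_add]
      field_simp
    have h3 : (X ^ Q ^ i : Polynomial k) ^ Q = X ^ Q ^ (i + 1) := by
      rw [← pow_mul, ← pow_succ]
    rw [mul_pow, ← C_pow, h1, h3, ← mul_assoc, ← C_mul, h2, hf]
  have hSkey : S ^ Q - C (β ^ (Q - 1))⁻¹ * S = X ^ Q ^ (n + 1) - X := by
    have hsum := sum_pow_char_pow (p := p) (n := e * 2) (Finset.range (n + 1))
      (fun i => (C (β ^ (Q ^ (i + 1) - 1)) * X ^ Q ^ i : Polynomial k))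
    rw [← hQp] at hsum
    rw [hS, hsum, Finset.mul_sum, ← Finset.sum_sub_distrib]
    rw [Finset.sum_congr rfl fun i _ => hterm i, Finset.sum_range_sub f]
    have hf0 : f 0 = X := by
      simp [hf]
    have hfn : f (n + 1) = X ^ Q ^ (n + 1) := by
      have hb : β ^ (Q ^ (n + 2) - Q) = 1 := by
        have h1 : β ^ Q ^ (n + 2) = β ^ Q := by
          rw [pow_succ, pow_mul, hβQ]
        rw [pow_sub₀ β hβ0 (hQle (n + 1)), h1, mul_inv_cancel₀ (pow_ne_zero _ hβ0)]
      rw [hf]; simp only [hb, map_one, one_mul]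
    rw [hf0, hfn]
  -- reduce the equation to h := g - S
  have heqn : g ^ Q - C (β ^ (Q - 1))⁻¹ * g - (X ^ Q ^ (n + 1) - X) = 0 ↔
      (g - S) ^ Q = C (β ^ (Q - 1))⁻¹ * (g - S) := by
    rw [frob_sub, ← hSkey]
    constructor
    · intro h
      have := sub_eq_zero.mp h
      rw [mul_sub]
      linear_combination this
    · intro h
      rw [mul_sub] at h
      linear_combination h
  -- rewrite statement exponents
  rw [hexp (n + 1)]
  have hSrw : (∑ i ∈ Finset.range (n + 1),
        C (β ^ ((p ^ e) ^ (2 * (i + 1)) - 1)) * X ^ (p ^ e) ^ (2 * i)) = S := by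
    refine Finset.sum_congr rfl fun i _ => ?_
    rw [← hqdef, hexp (i + 1), hexp i]
  rw [hSrw, heqn]
  constructor
  · intro h
    -- degree argument: g - S is constant
    have hdeg : (g - S).natDegree = 0 := by
      by_contra hd
      have hne : g - S ≠ 0 := fun h0 => hd (by simp [h0])
      have h1 : ((g - S) ^ Q).natDegree = Q * (g - S).natDegree := natDegree_pow _ _
      have h2 : (C (β ^ (Q - 1))⁻¹ * (g - S)).natDegree ≤ (g - S).natDegree :=
        (natDegree_mul_le).trans (by simp)
      have h3 : Q * (g - S).natDegree ≤ (g - S).natDegree := by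
        calc Q * (g - S).natDegree = ((g - S) ^ Q).natDegree := (natDegree_pow _ _).symm
          _ = (C (β ^ (Q - 1))⁻¹ * (g - S)).natDegree := by rw [h]
          _ ≤ _ := h2
      nlinarith [Nat.pos_of_ne_zero hd, hQ1]
    obtain ⟨c, hc⟩ := natDegree_eq_zero.mp hdeg
    have hc' : c ^ Q = (β ^ (Q - 1))⁻¹ * c := by
      have := h
      rw [← hc, ← C_pow, ← C_mul] at this
      exact C_injective this
    refine ⟨c * β, ?_, ?_⟩
    · have hbQ : β ^ Q = β ^ (Q - 1) * β := by
        rw [← pow_succ]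
        congr 1
        omega
      rw [mul_pow, hc', hbQ]
      field_simp
    · rw [mul_div_cancel_right₀ c hβ0]
      exact sub_eq_iff_eq_add'.mp hc.symm
  · rintro ⟨lam, hlam, hg⟩
    have : g - S = C (lam / β) := by rw [hg]; ring
    rw [this, ← C_pow, ← C_mul]
    congr 1
    rw [div_pow, hlam]
    rw [pow_sub₀ β hβ0 (le_of_lt hQ1)]
    field_simp
end

section
/- Let q be a prime power, n ≥ 1, and L(x) = x + x^(q²) + ⋯ + x^(q^(2n)). The value set of the polynomial L(x)^(q+1) on F_{q^(2(n+1))} is F_q, which has q = ⌈q^(2(n+1))/(q^(2n)(q+1))⌉ elements; hence L(x)^(q+1) is a minimal value set polynomial over F_{q^(2(n+1))}. -/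
open Polynomial Finset

/-- Number of distinct roots of a nonzero polynomial in a field is at most its natDegree. -/
lemma aux_card_eval_zero_le {K : Type*} [Field K] [Fintype K] [DecidableEq K]
    (P : Polynomial K) (hP : P ≠ 0) :
    (Finset.univ.filter fun a : K => P.eval a = 0).card ≤ P.natDegree := by
  have hsub : (Finset.univ.filter fun a : K => P.eval a = 0) ⊆ P.roots.toFinset := by
    intro a ha
    simp only [Finset.mem_filter, Finset.mem_univ, true_and] at ha
    simpa [Polynomial.mem_roots, hP, Polynomial.IsRoot] using ha
  calc (Finset.univ.filter fun a : K => P.eval a = 0).card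
      ≤ P.roots.toFinset.card := Finset.card_le_card hsub
    _ ≤ Multiset.card P.roots := Multiset.toFinset_card_le _
    _ ≤ P.natDegree := P.card_roots'

/-- the value set of L(x)^(q+1) on F_{q^(2(n+1))} has exactly
q = ⌈q^(2(n+1)) / (q^(2n)(q+1))⌉ elements, i.e. L(x)^(q+1) is a minimal value
set polynomial. -/
theorem stmt11 {K : Type*} [Field K] [Fintype K] [DecidableEq K] (p q n : ℕ)
    (hp : p.Prime) [CharP K p] (hq : ∃ e : ℕ, 0 < e ∧ q = p ^ e) (hn : 1 ≤ n)
    (hK : Fintype.card K = q ^ (2 * (n + 1))) :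
    (Finset.image
        (fun a : K => (∑ i ∈ Finset.range (n + 1), a ^ q ^ (2 * i)) ^ (q + 1))
        Finset.univ).card = q ∧
    q = ⌈(q ^ (2 * (n + 1)) : ℚ) / ((q : ℚ) ^ (2 * n) * ((q : ℚ) + 1))⌉₊ := by
  obtain ⟨e, he, hqe⟩ := hq
  haveI : ExpChar K p := ExpChar.prime hp
  have hq2 : 2 ≤ q := by
    rw [hqe]
    calc 2 = 2 ^ 1 := (pow_one 2).symm
    _ ≤ 2 ^ e := Nat.pow_le_pow_right (by norm_num) he
    _ ≤ p ^ e := Nat.pow_le_pow_left hp.two_le e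
  have hq1 : 1 < q := hq2
  set m := (Finset.image
      (fun a : K => (∑ i ∈ Finset.range (n + 1), a ^ q ^ (2 * i)) ^ (q + 1))
      Finset.univ).card with hm
  -- every value v satisfies v ^ q = v
  have hval : ∀ a : K,
      ((∑ i ∈ Finset.range (n + 1), a ^ q ^ (2 * i)) ^ (q + 1)) ^ q
        = (∑ i ∈ Finset.range (n + 1), a ^ q ^ (2 * i)) ^ (q + 1) := by
    intro a
    set t : K := ∑ i ∈ Finset.range (n + 1), a ^ q ^ (2 * i) with ht
    have hq2e : q ^ 2 = p ^ (2 * e) := by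
      rw [hqe, ← pow_mul, Nat.mul_comm]
    have htq2 : t ^ q ^ 2 = t := by
      rw [ht, hq2e, sum_pow_char_pow]
      have hstep : ∀ i ∈ Finset.range (n + 1),
          (a ^ q ^ (2 * i)) ^ p ^ (2 * e) = a ^ q ^ (2 * (i + 1)) := by
        intro i _
        rw [← hq2e, ← pow_mul, ← pow_add,
          (by ring : 2 * i + 2 = 2 * (i + 1))]
      rw [Finset.sum_congr rfl hstep]
      have hpowcard : a ^ q ^ (2 * (n + 1)) = a := by
        rw [← hK]; exact FiniteField.pow_card a
      have hf0 : a ^ q ^ (2 * 0) = a := by norm_num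
      have key : (∑ i ∈ Finset.range (n + 1), a ^ q ^ (2 * (i + 1))) + a ^ q ^ (2 * 0)
          = (∑ i ∈ Finset.range (n + 1), a ^ q ^ (2 * i)) + a ^ q ^ (2 * (n + 1)) := by
        rw [← Finset.sum_range_succ' (fun i => a ^ q ^ (2 * i)) (n + 1),
          Finset.sum_range_succ]
      rw [hpowcard, hf0] at key
      exact add_right_cancel key
    calc (t ^ (q + 1)) ^ q = t ^ q ^ 2 * t ^ q := by ring
      _ = t * t ^ q := by rw [htq2]
      _ = t ^ (q + 1) := by ring
  -- upper bound m ≤ q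
  have hmle : m ≤ q := by
    have hco : (X ^ q - X : Polynomial K).coeff q = 1 := by
      rw [Polynomial.coeff_sub, Polynomial.coeff_X_pow, Polynomial.coeff_X,
        if_pos rfl, if_neg (by omega : ¬ (1 = q)), sub_zero]
    have hPne : (X ^ q - X : Polynomial K) ≠ 0 := by
      intro h; rw [h] at hco; simp at hco
    have hdle : (X ^ q - X : Polynomial K).natDegree ≤ q := by
      refine (Polynomial.natDegree_sub_le _ _).trans ?_
      simp [Polynomial.natDegree_X_pow, Polynomial.natDegree_X]
      omega
    have hsub : (Finset.image
        (fun a : K => (∑ i ∈ Finset.range (n + 1), a ^ q ^ (2 * i)) ^ (q + 1))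
        Finset.univ) ⊆ Finset.univ.filter fun v : K => (X ^ q - X : Polynomial K).eval v = 0 := by
      intro v hv
      simp only [Finset.mem_image, Finset.mem_univ, true_and] at hv
      obtain ⟨a, ha⟩ := hv
      simp only [Finset.mem_filter, Finset.mem_univ, true_and, Polynomial.eval_sub,
        Polynomial.eval_pow, Polynomial.eval_X, sub_eq_zero]
      rw [← ha]; exact hval a
    calc m ≤ (Finset.univ.filter fun v : K => (X ^ q - X : Polynomial K).eval v = 0).card :=
        Finset.card_le_card hsub
      _ ≤ (X ^ q - X : Polynomial K).natDegree := aux_card_eval_zero_le _ hPne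
      _ ≤ q := hdle
  -- lower bound via counting
  have hlow : q ^ (2 * (n + 1)) ≤ q ^ (2 * n) * (q + 1) * m := by
    set S : Polynomial K := ∑ i ∈ Finset.range (n + 1), X ^ q ^ (2 * i) with hS
    have hSdeg : S.natDegree = q ^ (2 * n) := by
      apply le_antisymm
      · apply Polynomial.natDegree_sum_le_of_forall_le
        intro i hi
        rw [Polynomial.natDegree_X_pow]
        exact Nat.pow_le_pow_right (by omega)
          (by simp only [Finset.mem_range] at hi; omega)
      · apply Polynomial.le_natDegree_of_ne_zero
        rw [hS, Polynomial.finset_sum_coeff]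
        have hc : ∀ i ∈ Finset.range (n + 1),
            (X ^ q ^ (2 * i) : Polynomial K).coeff (q ^ (2 * n))
              = if i = n then 1 else 0 := by
          intro i hi
          simp only [Finset.mem_range] at hi
          rw [Polynomial.coeff_X_pow]
          by_cases h : i = n
          · simp [h]
          · have hne : q ^ (2 * i) ≠ q ^ (2 * n) := by
              intro hc
              exact h (by have := Nat.pow_right_injective hq2 hc; omega)
            rw [if_neg (fun hc => hne hc.symm), if_neg h]
        rw [Finset.sum_congr rfl hc]
        simp
    have hPdeg : (S ^ (q + 1)).natDegree = q ^ (2 * n) * (q + 1) := by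
      rw [Polynomial.natDegree_pow, hSdeg, Nat.mul_comm]
    have hSne : S ^ (q + 1) ≠ 0 := by
      intro h
      rw [h, Polynomial.natDegree_zero] at hPdeg
      have : 0 < q ^ (2 * n) * (q + 1) := by positivity
      omega
    have hdegpos : 0 < (S ^ (q + 1)).degree := by
      rw [Polynomial.degree_eq_natDegree hSne, hPdeg]
      have : 0 < q ^ (2 * n) * (q + 1) := by positivity
      exact_mod_cast this
    have hcount := FiniteField.card_image_polynomial_eval (R := K) hdegpos
    rw [hK, hPdeg] at hcount
    have himg : (Finset.univ.image fun x : K => (S ^ (q + 1)).eval x)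
        = (Finset.image
        (fun a : K => (∑ i ∈ Finset.range (n + 1), a ^ q ^ (2 * i)) ^ (q + 1))
        Finset.univ) := by
      apply Finset.image_congr
      intro a _
      simp [hS, Polynomial.eval_pow, Polynomial.eval_finset_sum]
    rw [himg] at hcount
    exact hcount
  have hmq : m = q := by
    by_contra h
    have hm2 : m + 1 ≤ q := by omega
    have hA : 0 < q ^ (2 * n) := by positivity
    have h1 : (q + 1) * (m + 1) ≤ (q + 1) * q := Nat.mul_le_mul_left _ hm2
    have h2 : (q + 1) * m + 1 ≤ q ^ 2 := by nlinarith
    have h3 : q ^ (2 * n) * ((q + 1) * m) + q ^ (2 * n) ≤ q ^ (2 * n) * q ^ 2 := by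
      calc q ^ (2 * n) * ((q + 1) * m) + q ^ (2 * n)
          = q ^ (2 * n) * ((q + 1) * m + 1) := by ring
        _ ≤ q ^ (2 * n) * q ^ 2 := Nat.mul_le_mul_left _ h2
    have hexp : q ^ (2 * (n + 1)) = q ^ (2 * n) * q ^ 2 := by ring
    rw [hexp] at hlow
    nlinarith
  refine ⟨hmq, ?_⟩
  have hr : (q ^ (2 * (n + 1)) : ℚ) / ((q : ℚ) ^ (2 * n) * ((q : ℚ) + 1))
      = (q : ℚ) ^ 2 / ((q : ℚ) + 1) := by
    have hq0 : (q : ℚ) ≠ 0 := by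
      exact_mod_cast (by omega : q ≠ 0)
    have hq1' : ((q : ℚ) + 1) ≠ 0 := by positivity
    field_simp
    ring
  rw [hr]
  symm
  rw [Nat.ceil_eq_iff (by omega)]
  have hqQ : (1 : ℚ) < q := by exact_mod_cast hq1
  constructor
  · rw [lt_div_iff₀ (by positivity)]
    have hcast : ((q - 1 : ℕ) : ℚ) = (q : ℚ) - 1 := by
      push_cast [hq1.le]
      ring
    rw [hcast]
    nlinarith
  · rw [div_le_iff₀ (by positivity)]
    nlinarith
end

section
/- Let q be a prime power and n ≥ 1. Then the genus g = q^(2n)(q+1)(q^(2n+1)−2)/2 + 1 and the order N = q^(4n+1)(q²−1)(q+1) satisfy N ≥ g^((2n+2)/(2n+1)). -/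
/-- with g = q^(2n)(q+1)(q^(2n+1)−2)/2 + 1 and
N = q^(4n+1)(q²−1)(q+1), one has N ≥ g^((2n+2)/(2n+1)). -/
theorem stmt12 (q n : ℕ) (hq : IsPrimePow q) (hn : 1 ≤ n) :
    (q : ℝ) ^ (4 * n + 1) * ((q : ℝ) ^ 2 - 1) * ((q : ℝ) + 1) ≥
      ((q : ℝ) ^ (2 * n) * ((q : ℝ) + 1) * ((q : ℝ) ^ (2 * n + 1) - 2) / 2 + 1) ^
        ((2 * (n : ℝ) + 2) / (2 * (n : ℝ) + 1)) := by
  have hq2 : (2 : ℝ) ≤ (q : ℝ) := by exact_mod_cast hq.two_le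
  set a : ℝ := (q : ℝ) with ha
  have ha0 : (0 : ℝ) ≤ a := by linarith
  set g : ℝ := a ^ (2 * n) * (a + 1) * (a ^ (2 * n + 1) - 2) / 2 + 1 with hgdef
  set N : ℝ := a ^ (4 * n + 1) * (a ^ 2 - 1) * (a + 1) with hNdef
  set C : ℝ := (a + 1) * a ^ (4 * n + 1) / 2 with hCdef
  have hsplit : a ^ (4 * n + 1) = a ^ (2 * n + 1) * a ^ (2 * n) := by
    rw [← pow_add]; congr 1; omega
  have hone : (1 : ℝ) ≤ a ^ (2 * n) := one_le_pow₀ (by linarith)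
  have h2le : (2 : ℝ) ≤ a ^ (2 * n + 1) := by
    calc (2 : ℝ) ≤ a := hq2
    _ ≤ a ^ (2 * n + 1) := le_self_pow₀ (by linarith) (by omega)
  have hg0 : (0 : ℝ) ≤ g := by
    have h1 : (0 : ℝ) ≤ a ^ (2 * n) * (a + 1) * (a ^ (2 * n + 1) - 2) := by
      apply mul_nonneg (mul_nonneg (by positivity) (by linarith)) (by linarith)
    rw [hgdef]; linarith
  have hC0 : (0 : ℝ) ≤ C := by rw [hCdef]; positivity
  have hgC : g ≤ C := by
    have h1 : (1 : ℝ) ≤ a ^ (2 * n) * (a + 1) := by nlinarith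
    rw [hgdef, hCdef, hsplit]; nlinarith [pow_nonneg ha0 (2 * n)]
  have hN : N = C * (2 * (a ^ 2 - 1)) := by rw [hNdef, hCdef]; ring
  have hmul0 : (0 : ℝ) ≤ 2 * (a - 1) := by linarith
  have hCle : C ≤ (2 * (a ^ 2 - 1)) ^ (2 * n + 1) := by
    have h1 : a ^ (2 * n + 1) ≤ (2 * (a - 1)) ^ (2 * n + 1) :=
      pow_le_pow_left₀ ha0 (by linarith) _
    have h2 : a ^ (2 * n) ≤ (a + 1) ^ (2 * n) :=
      pow_le_pow_left₀ ha0 (by linarith) _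
    have h3 : C ≤ (2 * (a - 1)) ^ (2 * n + 1) * (a + 1) ^ (2 * n) * (a + 1) / 2 := by
      rw [hCdef, hsplit]
      have hx : a ^ (2 * n + 1) * a ^ (2 * n) ≤
          (2 * (a - 1)) ^ (2 * n + 1) * (a + 1) ^ (2 * n) := by
        apply mul_le_mul h1 h2 (by positivity) (by positivity)
      nlinarith
    have h4 : (2 * (a - 1)) ^ (2 * n + 1) * (a + 1) ^ (2 * n) * (a + 1) / 2 ≤
        (2 * (a - 1)) ^ (2 * n + 1) * (a + 1) ^ (2 * n) * (a + 1) := by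
      have : (0 : ℝ) ≤ (2 * (a - 1)) ^ (2 * n + 1) * (a + 1) ^ (2 * n) * (a + 1) := by
        positivity
      linarith
    have h5 : (2 * (a ^ 2 - 1)) ^ (2 * n + 1) =
        (2 * (a - 1)) ^ (2 * n + 1) * (a + 1) ^ (2 * n) * (a + 1) := by
      rw [mul_assoc, ← pow_succ, ← mul_pow]; congr 1; ring
    rw [h5]; exact h3.trans h4
  have key : g ^ (2 * n + 2) ≤ N ^ (2 * n + 1) := by
    calc g ^ (2 * n + 2) ≤ C ^ (2 * n + 2) := pow_le_pow_left₀ hg0 hgC _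
    _ = C ^ (2 * n + 1) * C := by rw [← pow_succ]
    _ ≤ C ^ (2 * n + 1) * (2 * (a ^ 2 - 1)) ^ (2 * n + 1) := by
        apply mul_le_mul_of_nonneg_left hCle (by positivity)
    _ = (C * (2 * (a ^ 2 - 1))) ^ (2 * n + 1) := (mul_pow _ _ _).symm
    _ = N ^ (2 * n + 1) := by rw [hN]
  have hN0 : (0 : ℝ) ≤ N := by
    rw [hN]; apply mul_nonneg hC0; nlinarith
  have hd : (0 : ℝ) < 2 * (n : ℝ) + 1 := by positivity
  rw [ge_iff_le]
  have e1 : (2 * (n : ℝ) + 2) / (2 * (n : ℝ) + 1) =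
      ((2 * n + 2 : ℕ) : ℝ) * (1 / (2 * (n : ℝ) + 1)) := by
    push_cast; ring
  rw [e1, Real.rpow_mul hg0, Real.rpow_natCast]
  calc (g ^ (2 * n + 2)) ^ ((1 : ℝ) / (2 * (n : ℝ) + 1))
      ≤ (N ^ (2 * n + 1)) ^ ((1 : ℝ) / (2 * (n : ℝ) + 1)) :=
        Real.rpow_le_rpow (by positivity) key (by positivity)
    _ = N := by
        rw [← Real.rpow_natCast N (2 * n + 1), ← Real.rpow_mul hN0]
        rw [show ((2 * n + 1 : ℕ) : ℝ) * (1 / (2 * (n : ℝ) + 1)) = 1 by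
          push_cast; field_simp]
        exact Real.rpow_one N
end
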